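/- arXiv:1212.6489 — 3 statements merged into one kernel-verified Lean document; each statement's English description precedes it below -/
import Mathlib

section
/- Let N and d be positive integers and let φ : Matrix N N ℝ → (ℝ^d → ℝ^d) satisfy φ(1) = id and φ(g*h) = φ(g) ∘ φ(h) for all invertible N×N real matrices g, h (an action of GL(N,ℝ) on ℝ^d, not necessarily linear in x). Assume that for each y ∈ ℝ^d the map g ↦ φ(g)(y) is Fréchet differentiable at every invertible matrix. Fix x ∈ ℝ^d and a covector ξ ∈ (ℝ^d →ₗ[ℝ] ℝ), and define the phase S : Matrix N N ℝ × (Matrix N N ℝ →ₗ[ℝ] ℝ) → ℝ by S(v,θ) = ξ(φ(exp(-v))(x)) - θ(v), where exp is the matrix exponential. Then S is differentiable, and its total derivative vanishes at (v,θ) if and only if v = 0 and θ = J(x,ξ), where J(x,ξ)(w) = -ξ(X^w(x)) and X^w(x) is the derivative at the identity matrix of g ↦ φ(g)(x) applied to w. Moreover the value of S at this unique critical point is S(0, J(x,ξ)) = ξ(x). -/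
attribute [local instance] Matrix.normedAddCommGroup Matrix.normedSpace

/-- For a (not necessarily linear) action `φ` of `GL(N,ℝ)` on `ℝ^d`, differentiable in the
group variable, the phase `S(v,θ) = ξ(φ(exp(-v))(x)) - θ(v)` of the oscillatory integral
defining the quantized momentum map is differentiable and has a unique critical point
`(v,θ) = (0, J(x,ξ))`, where `J(x,ξ)(w) = -ξ(X^w(x))` is the classical momentum map of the
cotangent lift; the critical value is `S(0, J(x,ξ)) = ξ(x)`. -/
theorem stmt3 (N d : ℕ) (hN : 0 < N) (hd : 0 < d)
    (φ : Matrix (Fin N) (Fin N) ℝ → (Fin d → ℝ) → (Fin d → ℝ))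
    (hone : φ 1 = id)
    (hmul : ∀ g h : Matrix (Fin N) (Fin N) ℝ, IsUnit g → IsUnit h →
      φ (g * h) = φ g ∘ φ h)
    (hdiff : ∀ (y : Fin d → ℝ) (g : Matrix (Fin N) (Fin N) ℝ), IsUnit g →
      DifferentiableAt ℝ (fun h => φ h y) g)
    (x : Fin d → ℝ) (ξ : (Fin d → ℝ) →L[ℝ] ℝ)
    (S : Matrix (Fin N) (Fin N) ℝ × (Matrix (Fin N) (Fin N) ℝ →L[ℝ] ℝ) → ℝ)
    (hS : S = fun p => ξ (φ (NormedSpace.exp (-p.1)) x) - p.2 p.1)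
    (J : Matrix (Fin N) (Fin N) ℝ →L[ℝ] ℝ)
    (hJ : J = -(ξ.comp (fderiv ℝ (fun g => φ g x) 1))) :
    Differentiable ℝ S ∧
    (∀ (v : Matrix (Fin N) (Fin N) ℝ) (θ : Matrix (Fin N) (Fin N) ℝ →L[ℝ] ℝ),
      fderiv ℝ S (v, θ) = 0 ↔ v = 0 ∧ θ = J) ∧
    S (0, J) = ξ x := by
  classical
  -- The algebra equivalence with the Banach algebra of continuous endomorphisms
  let T : Matrix (Fin N) (Fin N) ℝ ≃ₐ[ℝ] ((Fin N → ℝ) →L[ℝ] (Fin N → ℝ)) :=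
    Matrix.toLinAlgEquiv'.trans
      (AlgEquiv.ofLinearEquiv (LinearMap.toContinuousLinearMap)
        (by ext y; rfl) (fun f g => by ext y; rfl))
  -- T and its inverse as continuous linear maps
  let TL : Matrix (Fin N) (Fin N) ℝ →L[ℝ] ((Fin N → ℝ) →L[ℝ] (Fin N → ℝ)) :=
    LinearMap.toContinuousLinearMap T.toLinearMap
  let TL' : ((Fin N → ℝ) →L[ℝ] (Fin N → ℝ)) →L[ℝ] Matrix (Fin N) (Fin N) ℝ :=
    LinearMap.toContinuousLinearMap T.symm.toLinearMap
  have hTL : ∀ v, TL v = T v := fun v => rfl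
  have hTL' : ∀ f, TL' f = T.symm f := fun f => rfl
  -- exp commutes with T
  have hmapexp : ∀ v : Matrix (Fin N) (Fin N) ℝ,
      T (NormedSpace.exp v) = NormedSpace.exp (T v) := by
    intro v
    have hsE : Summable (fun n : ℕ => ((Nat.factorial n : ℝ))⁻¹ • (T v) ^ n) :=
      NormedSpace.expSeries_summable' (𝕂 := ℝ) (T v)
    have hsum : Summable (fun n : ℕ => ((Nat.factorial n : ℝ))⁻¹ • v ^ n) := by
      have hs2 := hsE.map TL'.toLinearMap.toAddMonoidHom TL'.continuous
      have he : (fun n : ℕ => TL'.toLinearMap.toAddMonoidHom (((Nat.factorial n : ℝ))⁻¹ • (T v) ^ n))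
          = fun n : ℕ => ((Nat.factorial n : ℝ))⁻¹ • v ^ n := by
        funext n
        show TL' (((Nat.factorial n : ℝ))⁻¹ • (T v) ^ n) = _
        rw [map_smul, hTL', ← map_pow T v n, T.symm_apply_apply]
      simp only [Function.comp_def] at hs2
      rwa [he] at hs2
    have h1 := ContinuousLinearMap.map_tsum TL hsum
    rw [NormedSpace.exp_eq_tsum (𝕂 := ℝ), NormedSpace.exp_eq_tsum (𝕂 := ℝ)]
    rw [← hTL, h1]
    congr 1
    funext n
    rw [map_smul, hTL, map_pow]
  -- exp (-v) is invertible
  have hunit : ∀ v : Matrix (Fin N) (Fin N) ℝ, IsUnit (NormedSpace.exp v) := by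
    intro v
    exact Matrix.isUnit_exp v
  -- exp as a composition through the Banach algebra
  have hexp_eq : (NormedSpace.exp : Matrix (Fin N) (Fin N) ℝ → Matrix (Fin N) (Fin N) ℝ)
      = fun v => TL' (NormedSpace.exp (TL v)) := by
    funext v
    rw [hTL, hTL', ← hmapexp, T.symm_apply_apply]
  -- differentiability of the matrix exponential
  have hexpdiff : Differentiable ℝ
      (NormedSpace.exp : Matrix (Fin N) (Fin N) ℝ → Matrix (Fin N) (Fin N) ℝ) := by
    rw [hexp_eq]
    intro v
    exact TL'.differentiableAt.comp _
      (((NormedSpace.exp_analytic (𝕂 := ℝ) (TL v)).differentiableAt).comp v TL.differentiableAt)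
  -- derivative of the matrix exponential at 0 is the identity
  have hexp0 : HasFDerivAt
      (NormedSpace.exp : Matrix (Fin N) (Fin N) ℝ → Matrix (Fin N) (Fin N) ℝ)
      (ContinuousLinearMap.id ℝ (Matrix (Fin N) (Fin N) ℝ)) 0 := by
    rw [hexp_eq]
    have h1 : HasFDerivAt (NormedSpace.exp :
        ((Fin N → ℝ) →L[ℝ] (Fin N → ℝ)) → ((Fin N → ℝ) →L[ℝ] (Fin N → ℝ)))
        (1 : _ →L[ℝ] _) (TL 0) := by
      rw [map_zero]
      exact hasFDerivAt_exp_zero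
    have h2 := TL'.hasFDerivAt.comp (0 : Matrix (Fin N) (Fin N) ℝ)
      (h1.comp (0 : Matrix (Fin N) (Fin N) ℝ) TL.hasFDerivAt)
    refine h2.congr_fderiv ?_
    ext1 w
    exact T.symm_apply_apply w
  clear hmapexp hTL hTL' hexp_eq
  clear_value T TL TL'
  clear T TL TL'
  -- the first factor of the phase
  set F : Matrix (Fin N) (Fin N) ℝ → ℝ :=
    fun v => ξ (φ (NormedSpace.exp (-v)) x) with hF
  -- F is differentiable
  have hFd : Differentiable ℝ F := by
    intro v
    have h1 : DifferentiableAt ℝ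
        (fun v : Matrix (Fin N) (Fin N) ℝ => NormedSpace.exp (-v)) v :=
      (hexpdiff (-v)).comp v (differentiableAt_id.neg)
    have h2 : DifferentiableAt ℝ (fun g : Matrix (Fin N) (Fin N) ℝ => φ g x)
        (NormedSpace.exp (-v)) := hdiff x _ (hunit (-v))
    exact ξ.differentiableAt.comp _ (DifferentiableAt.comp (g := fun g : Matrix (Fin N) (Fin N) ℝ => φ g x) v h2 h1)
  -- derivative of F at 0 is J
  have hF0 : HasFDerivAt F J 0 := by
    have h1 : HasFDerivAt (fun v : Matrix (Fin N) (Fin N) ℝ => -v)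
        (-(ContinuousLinearMap.id ℝ (Matrix (Fin N) (Fin N) ℝ)))
        (0 : Matrix (Fin N) (Fin N) ℝ) := (hasFDerivAt_id _).neg
    have h2 : HasFDerivAt
        (NormedSpace.exp : Matrix (Fin N) (Fin N) ℝ → Matrix (Fin N) (Fin N) ℝ)
        (ContinuousLinearMap.id ℝ (Matrix (Fin N) (Fin N) ℝ))
        ((fun v : Matrix (Fin N) (Fin N) ℝ => -v) 0) := by
      simpa using hexp0
    have h3 : HasFDerivAt (fun g : Matrix (Fin N) (Fin N) ℝ => φ g x)
        (fderiv ℝ (fun g : Matrix (Fin N) (Fin N) ℝ => φ g x) 1)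
        (NormedSpace.exp ((fun v : Matrix (Fin N) (Fin N) ℝ => -v) 0)) := by
      simp only [neg_zero, NormedSpace.exp_zero]
      exact (hdiff x 1 isUnit_one).hasFDerivAt
    have h4 := ξ.hasFDerivAt.comp (0 : Matrix (Fin N) (Fin N) ℝ)
      (h3.comp (0 : Matrix (Fin N) (Fin N) ℝ)
        (h2.comp (0 : Matrix (Fin N) (Fin N) ℝ) h1))
    refine h4.congr_fderiv ?_
    rw [hJ]
    ext w
    simp
    show ξ (fderiv ℝ (fun g => φ g x) 1 (-w)) = -ξ (fderiv ℝ (fun g => φ g x) 1 w)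
    rw [map_neg, map_neg]
  letI : NormedAddCommGroup (Matrix (Fin N) (Fin N) ℝ →L[ℝ] ℝ) :=
    ContinuousLinearMap.toNormedAddCommGroup
  letI : NormedSpace ℝ (Matrix (Fin N) (Fin N) ℝ →L[ℝ] ℝ) := ContinuousLinearMap.toNormedSpace
  -- derivative of S at (v, θ)
  have hSd : ∀ (v : Matrix (Fin N) (Fin N) ℝ) (θ : Matrix (Fin N) (Fin N) ℝ →L[ℝ] ℝ),
      HasFDerivAt S
      ((fderiv ℝ F v).comp (ContinuousLinearMap.fst ℝ (Matrix (Fin N) (Fin N) ℝ)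
          (Matrix (Fin N) (Fin N) ℝ →L[ℝ] ℝ))
        - (θ.comp (ContinuousLinearMap.fst ℝ (Matrix (Fin N) (Fin N) ℝ)
            (Matrix (Fin N) (Fin N) ℝ →L[ℝ] ℝ))
          + (ContinuousLinearMap.apply ℝ ℝ v).comp
              (ContinuousLinearMap.snd ℝ (Matrix (Fin N) (Fin N) ℝ)
                (Matrix (Fin N) (Fin N) ℝ →L[ℝ] ℝ)))) (v, θ) := by
    intro v θ
    have hfst : HasFDerivAt
        (fun p : Matrix (Fin N) (Fin N) ℝ × (Matrix (Fin N) (Fin N) ℝ →L[ℝ] ℝ) => p.1)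
        (ContinuousLinearMap.fst ℝ (Matrix (Fin N) (Fin N) ℝ)
          (Matrix (Fin N) (Fin N) ℝ →L[ℝ] ℝ)) (v, θ) := (ContinuousLinearMap.fst ℝ (Matrix (Fin N) (Fin N) ℝ) (Matrix (Fin N) (Fin N) ℝ →L[ℝ] ℝ)).hasFDerivAt
    have hA : HasFDerivAt
        (fun p : Matrix (Fin N) (Fin N) ℝ × (Matrix (Fin N) (Fin N) ℝ →L[ℝ] ℝ) => F p.1)
        ((fderiv ℝ F v).comp (ContinuousLinearMap.fst ℝ (Matrix (Fin N) (Fin N) ℝ)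
          (Matrix (Fin N) (Fin N) ℝ →L[ℝ] ℝ))) (v, θ) :=
      (((hFd v).hasFDerivAt).comp (v, θ) hfst :)
    have hswap : HasFDerivAt
        (fun p : Matrix (Fin N) (Fin N) ℝ × (Matrix (Fin N) (Fin N) ℝ →L[ℝ] ℝ) => (p.2, p.1))
        ((ContinuousLinearMap.snd ℝ (Matrix (Fin N) (Fin N) ℝ)
            (Matrix (Fin N) (Fin N) ℝ →L[ℝ] ℝ)).prod
          (ContinuousLinearMap.fst ℝ (Matrix (Fin N) (Fin N) ℝ)
            (Matrix (Fin N) (Fin N) ℝ →L[ℝ] ℝ))) (v, θ) :=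
      (hasFDerivAt_snd.prodMk hasFDerivAt_fst)
    have hbil := (isBoundedBilinearMap_apply
      (𝕜 := ℝ) (E := Matrix (Fin N) (Fin N) ℝ) (F := ℝ)).hasFDerivAt (θ, v)
    have hB : HasFDerivAt
        (fun p : Matrix (Fin N) (Fin N) ℝ × (Matrix (Fin N) (Fin N) ℝ →L[ℝ] ℝ) => p.2 p.1)
        (θ.comp (ContinuousLinearMap.fst ℝ (Matrix (Fin N) (Fin N) ℝ)
            (Matrix (Fin N) (Fin N) ℝ →L[ℝ] ℝ))
          + (ContinuousLinearMap.apply ℝ ℝ v).comp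
              (ContinuousLinearMap.snd ℝ (Matrix (Fin N) (Fin N) ℝ)
                (Matrix (Fin N) (Fin N) ℝ →L[ℝ] ℝ))) (v, θ) := by
      have h5 := hbil.comp (v, θ) hswap
      exact h5
    rw [hS]
    exact hA.sub hB
  refine ⟨?_, ?_, ?_⟩
  · intro p
    have := (hSd p.1 p.2).differentiableAt
    simpa using this
  · intro v θ
    rw [(hSd v θ).fderiv]
    constructor
    · intro h
      have happ : ∀ (w : Matrix (Fin N) (Fin N) ℝ) (η : Matrix (Fin N) (Fin N) ℝ →L[ℝ] ℝ),
          fderiv ℝ F v w - (θ w + η v) = 0 := by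
        intro w η
        have := congrFun (congrArg DFunLike.coe h) (w, η)
        exact this
      have hv : v = 0 := by
        by_contra hv
        have : SeparatingDual ℝ (Matrix (Fin N) (Fin N) ℝ) := instSeparatingDual
        obtain ⟨η, hη⟩ := SeparatingDual.exists_ne_zero (R := ℝ) hv
        have h0 := happ 0 η
        simp at h0
        exact hη h0
      subst hv
      refine ⟨rfl, ?_⟩
      ext w
      have h0 := happ w 0
      simp at h0
      have hw : θ w = fderiv ℝ F 0 w := by linarith
      rw [hw, hF0.fderiv]
    · rintro ⟨rfl, rfl⟩
      apply ContinuousLinearMap.ext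
      intro p
      show (fderiv ℝ F 0) p.1 - (θ p.1 + p.2 0) = 0
      rw [hF0.fderiv, map_zero p.2, add_zero, sub_self]
  · rw [hS]
    show ξ (φ (NormedSpace.exp (-(0 : Matrix (Fin N) (Fin N) ℝ))) x) - J 0 = ξ x
    set_option maxHeartbeats 2000000 in
    rw [neg_zero, NormedSpace.exp_zero, hone, map_zero, sub_zero]
    rfl
end

section
/- Let d be a positive integer and ψ : ℝ^d → ℝ^d a differentiable bijection with differentiable inverse ψ⁻¹. Fix x ∈ ℝ^d and a covector ξ ∈ (ℝ^d →ₗ[ℝ] ℝ). Define S : ℝ^d × (ℝ^d →ₗ[ℝ] ℝ) × ℝ^d × (ℝ^d →ₗ[ℝ] ℝ) → ℝ by S(x̄, ξ̄, x̃, ξ̃) = ξ̄(ψ⁻¹(x) - x̄) + ξ̃(x̄ - x̃) + ξ(ψ(x̃) - x). Then the total derivative of S vanishes at (x̄, ξ̄, x̃, ξ̃) if and only if x̄ = x̃ = ψ⁻¹(x) and ξ̄ = ξ̃ = ξ ∘ Dψ(ψ⁻¹(x)), where Dψ(y) denotes the Fréchet derivative of ψ at y. Moreover the value of S at this unique critical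 point is 0. -/
/-- The phase `S(x̄,ξ̄,x̃,ξ̃) = ξ̄(ψ⁻¹(x) - x̄) + ξ̃(x̄ - x̃) + ξ(ψ(x̃) - x)` of the
oscillatory integral expressing `T_g Op(f) T_{g⁻¹}` has a unique critical point
`x̄ = x̃ = ψ⁻¹(x)`, `ξ̄ = ξ̃ = ξ ∘ Dψ(ψ⁻¹(x))`, and the critical value is `0`. -/
theorem stmt4 (d : ℕ) (hd : 0 < d) (ψ ψinv : (Fin d → ℝ) → (Fin d → ℝ))
    (hleft : Function.LeftInverse ψinv ψ) (hright : Function.RightInverse ψinv ψ)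
    (hψ : Differentiable ℝ ψ) (hψinv : Differentiable ℝ ψinv)
    (x : Fin d → ℝ) (ξ : (Fin d → ℝ) →L[ℝ] ℝ)
    (S : ((Fin d → ℝ) × ((Fin d → ℝ) →L[ℝ] ℝ)) × ((Fin d → ℝ) × ((Fin d → ℝ) →L[ℝ] ℝ)) → ℝ)
    (hS : S = fun p => p.1.2 (ψinv x - p.1.1) + p.2.2 (p.1.1 - p.2.1) + ξ (ψ p.2.1 - x)) :
    (∀ p, fderiv ℝ S p = 0 ↔
      p = ((ψinv x, ξ.comp (fderiv ℝ ψ (ψinv x))), (ψinv x, ξ.comp (fderiv ℝ ψ (ψinv x))))) ∧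
    S ((ψinv x, ξ.comp (fderiv ℝ ψ (ψinv x))), (ψinv x, ξ.comp (fderiv ℝ ψ (ψinv x)))) = 0 := by
  subst hS
  have key : ∀ p q : ((Fin d → ℝ) × ((Fin d → ℝ) →L[ℝ] ℝ)) × ((Fin d → ℝ) × ((Fin d → ℝ) →L[ℝ] ℝ)),
      fderiv ℝ (fun p : ((Fin d → ℝ) × ((Fin d → ℝ) →L[ℝ] ℝ)) × ((Fin d → ℝ) × ((Fin d → ℝ) →L[ℝ] ℝ)) =>
        p.1.2 (ψinv x - p.1.1) + p.2.2 (p.1.1 - p.2.1) + ξ (ψ p.2.1 - x)) p q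
      = q.1.2 (ψinv x - p.1.1) - p.1.2 q.1.1
        + (q.2.2 (p.1.1 - p.2.1) + p.2.2 (q.1.1 - q.2.1))
        + ξ (fderiv ℝ ψ p.2.1 q.2.1) := by
    intro p q
    have h1 : HasFDerivAt (fun p : ((Fin d → ℝ) × ((Fin d → ℝ) →L[ℝ] ℝ)) × ((Fin d → ℝ) × ((Fin d → ℝ) →L[ℝ] ℝ)) => p.1.2)
        ((ContinuousLinearMap.snd ℝ _ _).comp (ContinuousLinearMap.fst ℝ _ _)) p :=
      hasFDerivAt_fst.snd
    have hproj11 : HasFDerivAt (fun p : ((Fin d → ℝ) × ((Fin d → ℝ) →L[ℝ] ℝ)) × ((Fin d → ℝ) × ((Fin d → ℝ) →L[ℝ] ℝ)) => p.1.1)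
        ((ContinuousLinearMap.fst ℝ _ _).comp (ContinuousLinearMap.fst ℝ _ _)) p :=
      hasFDerivAt_fst.fst
    have hproj21 : HasFDerivAt (fun p : ((Fin d → ℝ) × ((Fin d → ℝ) →L[ℝ] ℝ)) × ((Fin d → ℝ) × ((Fin d → ℝ) →L[ℝ] ℝ)) => p.2.1)
        ((ContinuousLinearMap.fst ℝ _ _).comp (ContinuousLinearMap.snd ℝ _ _)) p :=
      hasFDerivAt_snd.fst
    have h3 : HasFDerivAt (fun p : ((Fin d → ℝ) × ((Fin d → ℝ) →L[ℝ] ℝ)) × ((Fin d → ℝ) × ((Fin d → ℝ) →L[ℝ] ℝ)) => p.2.2)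
        ((ContinuousLinearMap.snd ℝ _ _).comp (ContinuousLinearMap.snd ℝ _ _)) p :=
      hasFDerivAt_snd.snd
    have h2 : HasFDerivAt (fun p : ((Fin d → ℝ) × ((Fin d → ℝ) →L[ℝ] ℝ)) × ((Fin d → ℝ) × ((Fin d → ℝ) →L[ℝ] ℝ)) => ψinv x - p.1.1)
        (0 - ((ContinuousLinearMap.fst ℝ _ _).comp (ContinuousLinearMap.fst ℝ _ _))) p :=
      (hasFDerivAt_const (ψinv x) p).sub hproj11
    have h4 : HasFDerivAt (fun p : ((Fin d → ℝ) × ((Fin d → ℝ) →L[ℝ] ℝ)) × ((Fin d → ℝ) × ((Fin d → ℝ) →L[ℝ] ℝ)) => p.1.1 - p.2.1)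
        (((ContinuousLinearMap.fst ℝ _ _).comp (ContinuousLinearMap.fst ℝ _ _))
          - ((ContinuousLinearMap.fst ℝ _ _).comp (ContinuousLinearMap.snd ℝ _ _))) p :=
      hproj11.sub hproj21
    have hψ' : HasFDerivAt (fun p : ((Fin d → ℝ) × ((Fin d → ℝ) →L[ℝ] ℝ)) × ((Fin d → ℝ) × ((Fin d → ℝ) →L[ℝ] ℝ)) => ψ p.2.1)
        ((fderiv ℝ ψ p.2.1).comp
          ((ContinuousLinearMap.fst ℝ _ _).comp (ContinuousLinearMap.snd ℝ _ _))) p :=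
      (hψ p.2.1).hasFDerivAt.comp p hproj21
    have h5 : HasFDerivAt (fun p : ((Fin d → ℝ) × ((Fin d → ℝ) →L[ℝ] ℝ)) × ((Fin d → ℝ) × ((Fin d → ℝ) →L[ℝ] ℝ)) => ξ (ψ p.2.1 - x))
        (ξ.comp ((fderiv ℝ ψ p.2.1).comp
          ((ContinuousLinearMap.fst ℝ _ _).comp (ContinuousLinearMap.snd ℝ _ _)))) p :=
      ξ.hasFDerivAt.comp p (hψ'.sub_const x)
    have hsum : HasFDerivAt (fun p : ((Fin d → ℝ) × ((Fin d → ℝ) →L[ℝ] ℝ)) × ((Fin d → ℝ) × ((Fin d → ℝ) →L[ℝ] ℝ)) =>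
        p.1.2 (ψinv x - p.1.1) + p.2.2 (p.1.1 - p.2.1) + ξ (ψ p.2.1 - x)) _ p :=
      ((h1.clm_apply h2).add (h3.clm_apply h4)).add h5
    rw [hsum.fderiv]
    simp
    ring
  constructor
  · rintro ⟨⟨xb, ξb⟩, xt, ξt⟩
    constructor
    · intro h0
      have hq : ∀ q : ((Fin d → ℝ) × ((Fin d → ℝ) →L[ℝ] ℝ)) × ((Fin d → ℝ) × ((Fin d → ℝ) →L[ℝ] ℝ)),
          q.1.2 (ψinv x - xb) - ξb q.1.1
          + (q.2.2 (xb - xt) + ξt (q.1.1 - q.2.1))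
          + ξ (fderiv ℝ ψ xt q.2.1) = 0 := by
        intro q
        have h := key ((xb, ξb), (xt, ξt)) q
        rw [h0] at h
        simpa using h.symm
      have hxb : xb = ψinv x := by
        funext i
        have h := hq ((0, ContinuousLinearMap.proj i), (0, 0))
        simp at h
        have : (ψinv x - xb) i = 0 := by simpa using h
        have := sub_eq_zero.mp this
        exact this.symm
      have hxt : xb = xt := by
        funext i
        have h := hq ((0, 0), (0, ContinuousLinearMap.proj i))
        simp at h
        have : (xb - xt) i = 0 := by simpa using h
        exact sub_eq_zero.mp this
      have hξbt : ξb = ξt := by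
        ext a
        have h := hq ((a, 0), (0, 0))
        simp at h
        linarith
      have hξt : ξt = ξ.comp (fderiv ℝ ψ xt) := by
        ext b
        have h := hq ((0, 0), (b, 0))
        simp at h
        simp only [ContinuousLinearMap.comp_apply]
        linarith
      subst hxt
      subst hxb
      simp [hξbt, hξt]
    · rintro h
      injection h with h1 h2
      injection h1 with ha hb
      injection h2 with hc hd'
      subst ha; subst hb; subst hc; subst hd'
      refine ContinuousLinearMap.ext fun q => ?_
      rw [key]
      simp
      ring
  · simp [hright x]
end

section
/- Let N and d be positive integers and let φ : Matrix N N ℝ → (ℝ^d → ℝ^d) satisfy φ(1) = id and φ(g*h) = φ(g) ∘ φ(h) for all invertible N×N real matrices g, h. Assume that for each y ∈ ℝ^d the map g ↦ φ(g)(y) is differentiable at the identity matrix, and that for each invertible g the map φ(g) : ℝ^d → ℝ^d is differentiable. Then for every invertible g, every x ∈ ℝ^d and every covector ξ ∈ (ℝ^d →ₗ[ℝ] ℝ), the momentum map is equivariant: J(φ̃_g(x,ξ)) = Ad_g^♯(J(x,ξ)). Consequently, for every function f on the dual space (Matrix N N ℝ →ₗ[ℝ] ℝ) and every invertible g, the comomentum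 map satisfies J^*(Ad_g^♯ f) = φ̃_{g⁻¹}^*(J^* f), where (J^* f)(x,ξ) = f(J(x,ξ)). -/
attribute [local instance] Matrix.normedAddCommGroup Matrix.normedSpace

open Filter Topology

/-- The momentum map of the cotangent lift: `J(x,ξ)(v) = -ξ(X^v(x))`, where
`X^v(x)` is the derivative at the identity of `g ↦ φ(g)(x)` in the direction `v`. -/
noncomputable def momentumMap {N d : ℕ}
    (φ : Matrix (Fin N) (Fin N) ℝ → (Fin d → ℝ) → (Fin d → ℝ))
    (x : Fin d → ℝ) (ξ : (Fin d → ℝ) →ₗ[ℝ] ℝ) : Matrix (Fin N) (Fin N) ℝ →ₗ[ℝ] ℝ :=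
  -(ξ ∘ₗ (fderiv ℝ (fun g => φ g x) 1).toLinearMap)

/-- The cotangent lift of the action: `φ̃_g(x,ξ) = (φ(g)(x), ξ ∘ Dφ(g⁻¹)(φ(g)(x)))`. -/
noncomputable def cotangentLift {N d : ℕ}
    (φ : Matrix (Fin N) (Fin N) ℝ → (Fin d → ℝ) → (Fin d → ℝ))
    (g : Matrix (Fin N) (Fin N) ℝ) (p : (Fin d → ℝ) × ((Fin d → ℝ) →ₗ[ℝ] ℝ)) :
    (Fin d → ℝ) × ((Fin d → ℝ) →ₗ[ℝ] ℝ) :=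
  (φ g p.1, p.2 ∘ₗ (fderiv ℝ (φ g⁻¹) (φ g p.1)).toLinearMap)

/-- The coadjoint action on linear functionals: `Ad_g^♯ α = α ∘ Ad_{g⁻¹}`,
where `Ad_{g⁻¹} v = g⁻¹ * v * g`. -/
noncomputable def coadjoint {N : ℕ} (g : Matrix (Fin N) (Fin N) ℝ)
    (α : Matrix (Fin N) (Fin N) ℝ →ₗ[ℝ] ℝ) : Matrix (Fin N) (Fin N) ℝ →ₗ[ℝ] ℝ :=
  α ∘ₗ ((LinearMap.mulLeft ℝ g⁻¹).comp (LinearMap.mulRight ℝ g))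

/-- Equivariance of the momentum map of the cotangent lift of a `GL(N,ℝ)`-action on `ℝ^d`:
`J(φ̃_g(x,ξ)) = Ad_g^♯(J(x,ξ))`, and consequently `J^*(Ad_g^♯ f) = φ̃_{g⁻¹}^*(J^* f)`. -/
theorem stmt7 (N d : ℕ) (hN : 0 < N) (hd : 0 < d)
    (φ : Matrix (Fin N) (Fin N) ℝ → (Fin d → ℝ) → (Fin d → ℝ))
    (hone : φ 1 = id)
    (hmul : ∀ g h : Matrix (Fin N) (Fin N) ℝ, IsUnit g → IsUnit h →
      φ (g * h) = φ g ∘ φ h)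
    (hdiff1 : ∀ y : Fin d → ℝ,
      DifferentiableAt ℝ (fun g => φ g y) (1 : Matrix (Fin N) (Fin N) ℝ))
    (hdiff2 : ∀ g : Matrix (Fin N) (Fin N) ℝ, IsUnit g → Differentiable ℝ (φ g)) :
    (∀ g : Matrix (Fin N) (Fin N) ℝ, IsUnit g →
      ∀ (x : Fin d → ℝ) (ξ : (Fin d → ℝ) →ₗ[ℝ] ℝ),
        momentumMap φ (cotangentLift φ g (x, ξ)).1 (cotangentLift φ g (x, ξ)).2 =
          coadjoint g (momentumMap φ x ξ)) ∧
    ∀ (f : (Matrix (Fin N) (Fin N) ℝ →ₗ[ℝ] ℝ) → ℝ) (g : Matrix (Fin N) (Fin N) ℝ),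
      IsUnit g → ∀ (x : Fin d → ℝ) (ξ : (Fin d → ℝ) →ₗ[ℝ] ℝ),
        f (coadjoint g⁻¹ (momentumMap φ x ξ)) =
          f (momentumMap φ (cotangentLift φ g⁻¹ (x, ξ)).1 (cotangentLift φ g⁻¹ (x, ξ)).2) := by
  have main : ∀ g : Matrix (Fin N) (Fin N) ℝ, IsUnit g →
      ∀ (x : Fin d → ℝ) (ξ : (Fin d → ℝ) →ₗ[ℝ] ℝ),
        momentumMap φ (cotangentLift φ g (x, ξ)).1 (cotangentLift φ g (x, ξ)).2 =
          coadjoint g (momentumMap φ x ξ) := by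
    intro g hg x ξ
    have hg' : IsUnit (g⁻¹ : Matrix (Fin N) (Fin N) ℝ) :=
      Matrix.isUnit_nonsing_inv_iff.mpr hg
    have hdet : IsUnit g.det := (Matrix.isUnit_iff_isUnit_det g).mp hg
    have hinvmul : g⁻¹ * g = 1 := Matrix.nonsing_inv_mul g hdet
    have hmulinv : g * g⁻¹ = 1 := Matrix.mul_nonsing_inv g hdet
    -- conjugation as a continuous linear map
    set Lc : Matrix (Fin N) (Fin N) ℝ →ₗ[ℝ] Matrix (Fin N) (Fin N) ℝ :=
      (LinearMap.mulLeft ℝ g⁻¹).comp (LinearMap.mulRight ℝ g) with hLc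
    let L : Matrix (Fin N) (Fin N) ℝ →L[ℝ] Matrix (Fin N) (Fin N) ℝ :=
      LinearMap.toContinuousLinearMap Lc
    have hL : ∀ h, L h = g⁻¹ * h * g := fun h => (mul_assoc _ _ _).symm
    have hL1 : L 1 = 1 := by rw [hL, mul_one, hinvmul]
    -- step 1 : K ∘ A = id
    have hcomp : (φ g⁻¹) ∘ (φ g) = id := by
      rw [← hmul g⁻¹ g hg' hg, hinvmul, hone]
    have hA : DifferentiableAt ℝ (φ g) x := (hdiff2 g hg) x
    have hK : DifferentiableAt ℝ (φ g⁻¹) (φ g x) := (hdiff2 g⁻¹ hg') (φ g x)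
    have hKA : (fderiv ℝ (φ g⁻¹) (φ g x)).comp (fderiv ℝ (φ g) x) =
        ContinuousLinearMap.id ℝ (Fin d → ℝ) := by
      rw [← fderiv_comp x hK hA, hcomp, fderiv_id]
    have hKA' : ∀ w, fderiv ℝ (φ g⁻¹) (φ g x) (fderiv ℝ (φ g) x w) = w := by
      intro w
      have := ContinuousLinearMap.ext_iff.mp hKA w
      simpa using this
    -- step 2 : eventual equality near 1
    have hopen : IsOpen {h : Matrix (Fin N) (Fin N) ℝ | IsUnit h} := by
      have : {h : Matrix (Fin N) (Fin N) ℝ | IsUnit h} =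
          (fun h : Matrix (Fin N) (Fin N) ℝ => h.det) ⁻¹' {0}ᶜ := by
        ext h
        simp [Matrix.isUnit_iff_isUnit_det, isUnit_iff_ne_zero]
      rw [this]
      exact (isOpen_compl_singleton).preimage (continuous_id.matrix_det)
    have hev : (fun h => φ h (φ g x)) =ᶠ[𝓝 (1 : Matrix (Fin N) (Fin N) ℝ)]
        fun h => φ g (φ (L h) x) := by
      filter_upwards [hopen.mem_nhds (by simp : IsUnit (1 : Matrix (Fin N) (Fin N) ℝ))]
        with h hh
      have hconj : IsUnit (g⁻¹ * h * g) := (hg'.mul hh).mul hg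
      have e1 : φ h (φ g x) = φ (h * g) x := by rw [hmul h g hh hg]; rfl
      have e2 : h * g = g * (g⁻¹ * h * g) := by
        rw [← mul_assoc, ← mul_assoc, hmulinv, one_mul]
      rw [e1, e2, hmul g _ hg hconj]
      simp only [Function.comp_apply, hL]
    -- fderiv of the RHS of hev
    have hF : DifferentiableAt ℝ (fun k => φ k x) (1 : Matrix (Fin N) (Fin N) ℝ) :=
      hdiff1 x
    have hF' : DifferentiableAt ℝ (fun k => φ k x) (L 1) := by rw [hL1]; exact hF
    have hInnerD : DifferentiableAt ℝ (fun h => φ (L h) x) 1 :=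
      hF'.comp 1 L.differentiableAt
    have hD2 : fderiv ℝ (fun h => φ (L h) x) 1 =
        (fderiv ℝ (fun k => φ k x) 1).comp L := by
      have h := fderiv_comp (𝕜 := ℝ) 1 hF' L.differentiableAt
      rw [hL1] at h
      exact h.trans (congrArg (fun T => (fderiv ℝ (fun k => φ k x) 1).comp T) L.fderiv)
    have hx1 : φ (L 1) x = x := by rw [hL1, hone]; rfl
    have hO : DifferentiableAt ℝ (φ g) (φ (L 1) x) := (hdiff2 g hg) _
    have hRHS : fderiv ℝ (fun h => φ g (φ (L h) x)) 1 =
        (fderiv ℝ (φ g) x).comp ((fderiv ℝ (fun k => φ k x) 1).comp L) := by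
      have h := fderiv_comp (𝕜 := ℝ) 1 hO hInnerD
      rw [hx1] at h
      exact h.trans (congrArg (fun T => (fderiv ℝ (φ g) x).comp T) hD2)
    have hfinal : fderiv ℝ (fun h => φ h (φ g x)) 1 =
        (fderiv ℝ (φ g) x).comp ((fderiv ℝ (fun k => φ k x) 1).comp L) :=
      hev.fderiv_eq.trans hRHS
    -- conclude
    apply LinearMap.ext
    intro v
    simp only [momentumMap, cotangentLift, coadjoint, LinearMap.neg_apply,
      LinearMap.comp_apply, ContinuousLinearMap.coe_coe, LinearMap.mulLeft_apply,
      LinearMap.mulRight_apply, hfinal, ContinuousLinearMap.comp_apply]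
    rw [hKA']
    simp only [hL, mul_assoc]
  refine ⟨main, ?_⟩
  intro f g hg x ξ
  exact congrArg f (main g⁻¹ (Matrix.isUnit_nonsing_inv_iff.mpr hg) x ξ).symm
end
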